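/- Let X = K_{n_1,...,n_m} be a complete multipartite graph with maximal independent sets X_1,...,X_m, and let P be a regular partition of X. Then the group aut(P) of automorphisms of X that fix P is isomorphic, as a group, to the automorphism group of the hypergraph τ(P). -/

import Mathlib

/-- The complete multipartite graph `K_{n_1, …, n_m}` with maximal independent sets
`X_i` of size `n i`, on the vertex type `Σ i, Fin (n i)`. -/
def KGen (m : ℕ) (n : Fin m → ℕ) : SimpleGraph (Σ i : Fin m, Fin (n i)) :=
  SimpleGraph.comap Sigma.fst ⊤

/-- `P` is a regular partition of `K_{n_1, …, n_m}`: a partition of the vertex set each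
of whose parts meets each maximal independent set in at most one vertex. -/
def IsRegularPartitionG (m : ℕ) (n : Fin m → ℕ)
    (P : Set (Set (Σ i : Fin m, Fin (n i)))) : Prop :=
  Setoid.IsPartition P ∧ ∀ p ∈ P, ∀ i : Fin m, {v | v ∈ p ∧ v.1 = i}.Subsingleton

/-- The incidence relation of the hypergraph `τ(P)`: its vertices are the parts of `P`,
its edges are the maximal independent sets `X_1, …, X_m`, and a part is incident to
`X_i` iff they intersect (for a regular partition, iff `|X_i ∩ P_{i'}| = 1`). -/
def tauIncG (m : ℕ) (n : Fin m → ℕ) (P : Set (Set (Σ i : Fin m, Fin (n i)))) :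
    ↥P → Fin m → Prop :=
  fun p i => ∃ v ∈ p.1, v.1 = i

/-- The group `aut(P)` of automorphisms of a graph `G` fixing a partition `P`,
as a subgroup of the permutation group of the vertices. -/
def autPart {V : Type*} (G : SimpleGraph V) (P : Set (Set V)) :
    Subgroup (Equiv.Perm V) where
  carrier := {σ | (∀ a b, G.Adj (σ a) (σ b) ↔ G.Adj a b) ∧ (fun s => ⇑σ '' s) '' P = P}
  one_mem' := by
    refine ⟨fun a b => by simp, ?_⟩
    simp
  mul_mem' := by
    rintro a b ⟨ha1, ha2⟩ ⟨hb1, hb2⟩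
    refine ⟨fun x y => ?_, ?_⟩
    · rw [Equiv.Perm.mul_apply, Equiv.Perm.mul_apply]
      exact (ha1 _ _).trans (hb1 x y)
    · have hfun : (fun s : Set V => ⇑(a * b) '' s)
          = (fun s : Set V => ⇑a '' s) ∘ (fun s : Set V => ⇑b '' s) := by
        funext s
        simp only [Equiv.Perm.coe_mul, Function.comp_apply]
        rw [← Set.image_image]
      rw [hfun, Set.image_comp, hb2, ha2]
  inv_mem' := by
    rintro a ⟨ha1, ha2⟩
    refine ⟨fun x y => ?_, ?_⟩
    · have h := ha1 (a⁻¹ x) (a⁻¹ y)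
      simpa using h.symm
    · have h2 := congrArg (Set.image (fun s : Set V => ⇑a⁻¹ '' s)) ha2
      rw [← Set.image_comp] at h2
      have hid : (fun s : Set V => ⇑a⁻¹ '' s) ∘ (fun s : Set V => ⇑a '' s) = id := by
        funext s
        simp [Function.comp, Set.image_image]
      rw [hid, Set.image_id] at h2
      exact h2.symm

/-- The automorphism group of a hypergraph given by its incidence relation
`I : Vh → Eh → Prop`, as a subgroup of the product of the permutation groups of the
vertices and of the edges. -/
def autHyp {Vh Eh : Type*} (I : Vh → Eh → Prop) :
    Subgroup (Equiv.Perm Vh × Equiv.Perm Eh) where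
  carrier := {στ | ∀ v e, I v e ↔ I (στ.1 v) (στ.2 e)}
  one_mem' := fun _ _ => Iff.rfl
  mul_mem' := by
    intro a b ha hb v e
    exact (hb v e).trans (ha (b.1 v) (b.2 e))
  inv_mem' := by
    intro a ha v e
    have h := ha (a.1⁻¹ v) (a.2⁻¹ e)
    simpa using h.symm


namespace Lemma32Aux

variable {m : ℕ} {n : Fin m → ℕ} {P : Set (Set (Σ i : Fin m, Fin (n i)))}

lemma kadj (a b : Σ i : Fin m, Fin (n i)) : (KGen m n).Adj a b ↔ a.1 ≠ b.1 := Iff.rfl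

lemma fst_iff {σ : Equiv.Perm (Σ i : Fin m, Fin (n i))}
    (hadj : ∀ a b, (KGen m n).Adj (σ a) (σ b) ↔ (KGen m n).Adj a b)
    (a b : Σ i : Fin m, Fin (n i)) : (σ a).1 = (σ b).1 ↔ a.1 = b.1 := by
  have h := (hadj a b).not
  simp only [kadj, ne_eq, not_not] at h
  exact h

/-- default vertex in the `i`-th fiber -/
def dv (hn : ∀ i, 1 ≤ n i) (i : Fin m) : Σ i : Fin m, Fin (n i) := ⟨i, ⟨0, hn i⟩⟩

def emap (hn : ∀ i, 1 ≤ n i) (σ : Equiv.Perm (Σ i : Fin m, Fin (n i))) (i : Fin m) :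
    Fin m :=
  (σ (dv hn i)).1

lemma fst_map (hn : ∀ i, 1 ≤ n i) {σ : Equiv.Perm (Σ i : Fin m, Fin (n i))}
    (hadj : ∀ a b, (KGen m n).Adj (σ a) (σ b) ↔ (KGen m n).Adj a b)
    (v : Σ i : Fin m, Fin (n i)) : (σ v).1 = emap hn σ v.1 :=
  (fst_iff hadj v (dv hn v.1)).2 rfl

/-- induced permutation of the fibers -/
def eperm (hn : ∀ i, 1 ≤ n i) (x : autPart (KGen m n) P) : Equiv.Perm (Fin m) where
  toFun := emap hn x.1
  invFun := emap hn (x⁻¹).1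
  left_inv i := by
    have h := (fst_map hn (x⁻¹).2.1 (x.1 (dv hn i))).symm
    show emap hn (x⁻¹).1 (x.1 (dv hn i)).1 = i
    rw [h]
    show ((x.1)⁻¹ (x.1 (dv hn i))).1 = i
    simp [dv]
  right_inv i := by
    have h := (fst_map hn x.2.1 ((x⁻¹).1 (dv hn i))).symm
    show emap hn x.1 ((x⁻¹).1 (dv hn i)).1 = i
    rw [h]
    show (x.1 ((x.1)⁻¹ (dv hn i))).1 = i
    simp [dv]

lemma eperm_apply (hn : ∀ i, 1 ≤ n i) (x : autPart (KGen m n) P)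
    (v : Σ i : Fin m, Fin (n i)) : (x.1 v).1 = eperm hn x v.1 :=
  fst_map hn x.2.1 v

/-- induced permutation of the parts -/
def pperm (x : autPart (KGen m n) P) : Equiv.Perm ↥P where
  toFun p := ⟨⇑x.1 '' p.1, x.2.2.subset (Set.mem_image_of_mem _ p.2)⟩
  invFun p := ⟨⇑(x⁻¹).1 '' p.1, (x⁻¹).2.2.subset (Set.mem_image_of_mem _ p.2)⟩
  left_inv p := by
    apply Subtype.ext
    show ⇑(x⁻¹).1 '' (⇑x.1 '' p.1) = p.1
    rw [Set.image_image]
    have : ∀ v, (x⁻¹).1 (x.1 v) = v := fun v => by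
      show (x.1)⁻¹ (x.1 v) = v; simp
    simp [this]
  right_inv p := by
    apply Subtype.ext
    show ⇑x.1 '' (⇑(x⁻¹).1 '' p.1) = p.1
    rw [Set.image_image]
    have : ∀ v, x.1 ((x⁻¹).1 v) = v := fun v => by
      show x.1 ((x.1)⁻¹ v) = v; simp
    simp [this]

lemma pperm_apply (x : autPart (KGen m n) P) (p : ↥P) :
    (pperm x p).1 = ⇑x.1 '' p.1 := rfl

/-- the homomorphism -/
def Phi (hn : ∀ i, 1 ≤ n i) :
    autPart (KGen m n) P →* autHyp (tauIncG m n P) where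
  toFun x := ⟨(pperm x, eperm hn x), by
    intro p i
    constructor
    · rintro ⟨v, hv, rfl⟩
      exact ⟨x.1 v, Set.mem_image_of_mem _ hv, eperm_apply hn x v⟩
    · rintro ⟨w, hw, hwi⟩
      rcases hw with ⟨v, hv, rfl⟩
      rw [eperm_apply hn x v] at hwi
      exact ⟨v, hv, (eperm hn x).injective hwi⟩⟩
  map_one' := by
    apply Subtype.ext
    refine Prod.ext ?_ ?_
    · apply Equiv.ext; intro p
      apply Subtype.ext
      show ⇑(1 : autPart (KGen m n) P).1 '' p.1 = p.1
      simp
    · apply Equiv.ext; intro i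
      show ((1 : autPart (KGen m n) P).1 (dv hn i)).1 = i
      simp [dv]
  map_mul' x y := by
    apply Subtype.ext
    refine Prod.ext ?_ ?_
    · apply Equiv.ext; intro p
      apply Subtype.ext
      show ⇑(x * y).1 '' p.1 = ⇑x.1 '' (⇑y.1 '' p.1)
      rw [Set.image_image]
      rfl
    · apply Equiv.ext; intro i
      show ((x * y).1 (dv hn i)).1 = emap hn x.1 (emap hn y.1 i)
      show (x.1 (y.1 (dv hn i))).1 = emap hn x.1 (emap hn y.1 i)
      rw [fst_map hn x.2.1 (y.1 (dv hn i))]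
      rfl

noncomputable def partOf (hreg : IsRegularPartitionG m n P)
    (v : Σ i : Fin m, Fin (n i)) : ↥P :=
  ⟨(hreg.1.2 v).choose, (hreg.1.2 v).choose_spec.1.1⟩

lemma mem_partOf (hreg : IsRegularPartitionG m n P) (v : Σ i : Fin m, Fin (n i)) :
    v ∈ (partOf hreg v).1 :=
  (hreg.1.2 v).choose_spec.1.2

lemma partOf_eq (hreg : IsRegularPartitionG m n P) {v : Σ i : Fin m, Fin (n i)}
    (q : ↥P) (hv : v ∈ q.1) : q = partOf hreg v :=
  Subtype.ext ((hreg.1.2 v).choose_spec.2 q.1 ⟨q.2, hv⟩)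

lemma reg_unique (hreg : IsRegularPartitionG m n P) (p : ↥P)
    {a b : Σ i : Fin m, Fin (n i)} (ha : a ∈ p.1) (hb : b ∈ p.1) (h : a.1 = b.1) :
    a = b :=
  hreg.2 p.1 p.2 b.1 ⟨ha, h⟩ ⟨hb, rfl⟩

noncomputable def gmap (hreg : IsRegularPartitionG m n P)
    (π : Equiv.Perm ↥P) (ρ : Equiv.Perm (Fin m))
    (hI : ∀ p i, tauIncG m n P p i ↔ tauIncG m n P (π p) (ρ i))
    (v : Σ i : Fin m, Fin (n i)) : Σ i : Fin m, Fin (n i) :=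
  ((hI (partOf hreg v) v.1).mp ⟨v, mem_partOf hreg v, rfl⟩).choose

lemma gmap_spec (hreg : IsRegularPartitionG m n P)
    (π : Equiv.Perm ↥P) (ρ : Equiv.Perm (Fin m))
    (hI : ∀ p i, tauIncG m n P p i ↔ tauIncG m n P (π p) (ρ i))
    (v : Σ i : Fin m, Fin (n i)) :
    gmap hreg π ρ hI v ∈ (π (partOf hreg v)).1 ∧ (gmap hreg π ρ hI v).1 = ρ v.1 :=
  ((hI (partOf hreg v) v.1).mp ⟨v, mem_partOf hreg v, rfl⟩).choose_spec

lemma gmap_unique (hreg : IsRegularPartitionG m n P)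
    (π : Equiv.Perm ↥P) (ρ : Equiv.Perm (Fin m))
    (hI : ∀ p i, tauIncG m n P p i ↔ tauIncG m n P (π p) (ρ i))
    {v w : Σ i : Fin m, Fin (n i)} (h1 : w ∈ (π (partOf hreg v)).1)
    (h2 : w.1 = ρ v.1) : w = gmap hreg π ρ hI v :=
  reg_unique hreg (π (partOf hreg v)) h1 (gmap_spec hreg π ρ hI v).1
    (h2.trans (gmap_spec hreg π ρ hI v).2.symm)

lemma gmap_comp (hreg : IsRegularPartitionG m n P)
    (π : Equiv.Perm ↥P) (ρ : Equiv.Perm (Fin m))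
    (hI : ∀ p i, tauIncG m n P p i ↔ tauIncG m n P (π p) (ρ i))
    (π' : Equiv.Perm ↥P) (ρ' : Equiv.Perm (Fin m))
    (hI' : ∀ p i, tauIncG m n P p i ↔ tauIncG m n P (π' p) (ρ' i))
    (hπ : ∀ p, π' (π p) = p) (hρ : ∀ i, ρ' (ρ i) = i)
    (v : Σ i : Fin m, Fin (n i)) :
    gmap hreg π' ρ' hI' (gmap hreg π ρ hI v) = v := by
  have hmem := (gmap_spec hreg π ρ hI v).1
  have hfst := (gmap_spec hreg π ρ hI v).2
  have hpw : partOf hreg (gmap hreg π ρ hI v) = π (partOf hreg v) :=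
    (partOf_eq hreg _ hmem).symm
  refine (gmap_unique hreg π' ρ' hI' ?_ ?_).symm
  · rw [hpw, hπ]; exact mem_partOf hreg v
  · rw [hfst, hρ]

end Lemma32Aux

/-- **Lemma 3.2.** For a regular partition `P` of a complete multipartite graph, the
group `aut(P)` is isomorphic to the automorphism group of the hypergraph `τ(P)`. -/
theorem autPart_iso_autHyp
    (m : ℕ) (hm : 1 ≤ m) (n : Fin m → ℕ) (hn : ∀ i, 1 ≤ n i)
    (P : Set (Set (Σ i : Fin m, Fin (n i))))
    (hreg : IsRegularPartitionG m n P) :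
    Nonempty (autPart (KGen m n) P ≃* autHyp (tauIncG m n P)) := by
  classical
  open Lemma32Aux in
  refine ⟨MulEquiv.ofBijective (Phi hn) ⟨?_, ?_⟩⟩
  · -- injective
    rw [injective_iff_map_eq_one]
    intro x hx
    have hx' := congrArg Subtype.val hx
    have hp : pperm x = 1 := congrArg Prod.fst hx'
    have he : eperm hn x = 1 := congrArg Prod.snd hx'
    apply Subtype.ext
    apply Equiv.ext
    intro v
    obtain ⟨p, ⟨hpP, hvp⟩, -⟩ := hreg.1.2 v
    have himg : ⇑x.1 '' p = p := by
      have := congrArg (fun e : Equiv.Perm ↥P => (e ⟨p, hpP⟩).1) hp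
      simpa [pperm_apply] using this
    have hmem : x.1 v ∈ p := himg ▸ Set.mem_image_of_mem _ hvp
    have hfst : (x.1 v).1 = v.1 := by
      rw [eperm_apply hn x v, he]; rfl
    exact hreg.2 p hpP v.1 ⟨hmem, hfst⟩ ⟨hvp, rfl⟩
  · -- surjective
    intro y
    obtain ⟨⟨π, ρ⟩, hy⟩ := y
    have hI : ∀ p i, tauIncG m n P p i ↔ tauIncG m n P (π p) (ρ i) := hy
    have hI' : ∀ p i, tauIncG m n P p i ↔ tauIncG m n P (π⁻¹ p) (ρ⁻¹ i) :=
      (autHyp (tauIncG m n P)).inv_mem' hy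
    have hπ : ∀ p, π⁻¹ (π p) = p := fun p => Equiv.symm_apply_apply π p
    have hρ : ∀ i, ρ⁻¹ (ρ i) = i := fun i => Equiv.symm_apply_apply ρ i
    have hπ' : ∀ p, π (π⁻¹ p) = p := fun p => Equiv.apply_symm_apply π p
    have hρ' : ∀ i, ρ (ρ⁻¹ i) = i := fun i => Equiv.apply_symm_apply ρ i
    set g := gmap hreg π ρ hI with hg
    set g' := gmap hreg π⁻¹ ρ⁻¹ hI' with hg'
    set σ : Equiv.Perm (Σ i : Fin m, Fin (n i)) :=
      ⟨g, g', gmap_comp hreg π ρ hI π⁻¹ ρ⁻¹ hI' hπ hρ,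
        gmap_comp hreg π⁻¹ ρ⁻¹ hI' π ρ hI hπ' hρ'⟩ with hσ
    have hσg : ⇑σ = g := rfl
    have himage : ∀ p : ↥P, g '' p.1 = (π p).1 := by
      intro p
      ext w
      constructor
      · rintro ⟨v, hv, rfl⟩
        have h1 : p = partOf hreg v := partOf_eq hreg p hv
        rw [h1]
        exact (gmap_spec hreg π ρ hI v).1
      · intro hw
        refine ⟨g' w, ?_, gmap_comp hreg π⁻¹ ρ⁻¹ hI' π ρ hI hπ' hρ' w⟩
        have hpw : partOf hreg w = π p := (partOf_eq hreg (π p) hw).symm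
        have := (gmap_spec hreg π⁻¹ ρ⁻¹ hI' w).1
        rw [hpw, hπ] at this
        exact this
    have hmemAut : σ ∈ autPart (KGen m n) P := by
      constructor
      · intro a b
        show (σ a).1 ≠ (σ b).1 ↔ a.1 ≠ b.1
        rw [hσg]
        rw [(gmap_spec hreg π ρ hI a).2, (gmap_spec hreg π ρ hI b).2]
        exact not_congr ⟨fun h => ρ.injective h, fun h => congrArg ρ h⟩
      · ext q
        constructor
        · rintro ⟨p, hp, rfl⟩
          show ⇑σ '' p ∈ P
          have := himage ⟨p, hp⟩
          rw [hσg]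
          show g '' (⟨p, hp⟩ : ↥P).1 ∈ P
          rw [this]
          exact (π ⟨p, hp⟩).2
        · intro hq
          refine ⟨(π⁻¹ ⟨q, hq⟩).1, (π⁻¹ ⟨q, hq⟩).2, ?_⟩
          show ⇑σ '' (π⁻¹ ⟨q, hq⟩).1 = q
          rw [hσg]
          have := himage (π⁻¹ ⟨q, hq⟩)
          rw [this, hπ']
    refine ⟨⟨σ, hmemAut⟩, ?_⟩
    apply Subtype.ext
    refine Prod.ext ?_ ?_
    · apply Equiv.ext; intro p
      apply Subtype.ext
      show ⇑σ '' p.1 = (π p).1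
      rw [hσg]; exact himage p
    · apply Equiv.ext; intro i
      show (σ (dv hn i)).1 = ρ i
      rw [hσg]
      exact (gmap_spec hreg π ρ hI (dv hn i)).2
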